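/- If h is a quadratic polynomial in Ising variables s₁, s₂, y ∈ {−1,1} that vanishes on all four points with y = s₁s₂, then the sum of the values of h over the four points with y = −s₁s₂ equals 0; in particular h cannot be ≥ 1 on all four of those points. -/
import Mathlib


theorem stmt_4 (a₀ a₁ a₂ a₃ a₁₂ a₁₃ a₂₃ : ℝ)
    (h : ℝ → ℝ → ℝ → ℝ)
    (hdef : ∀ s₁ s₂ y : ℝ, h s₁ s₂ y =
      a₀ + a₁ * s₁ + a₂ * s₂ + a₃ * y + a₁₂ * s₁ * s₂ + a₁₃ * s₁ * y + a₂₃ * s₂ * y)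
    (hvanish : ∀ s₁ s₂ : ℝ, s₁ ∈ ({-1, 1} : Set ℝ) → s₂ ∈ ({-1, 1} : Set ℝ) →
      h s₁ s₂ (s₁ * s₂) = 0) :
    h 1 1 (-1) + h 1 (-1) 1 + h (-1) 1 1 + h (-1) (-1) (-1) = 0 ∧
    ¬ ∀ s₁ s₂ : ℝ, s₁ ∈ ({-1, 1} : Set ℝ) → s₂ ∈ ({-1, 1} : Set ℝ) →
        1 ≤ h s₁ s₂ (-(s₁ * s₂)) := by
  have m1 : (-1 : ℝ) ∈ ({-1, 1} : Set ℝ) := by left; rfl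
  have p1 : (1 : ℝ) ∈ ({-1, 1} : Set ℝ) := by right; rfl
  have v1 := hvanish 1 1 p1 p1
  have v2 := hvanish 1 (-1) p1 m1
  have v3 := hvanish (-1) 1 m1 p1
  have v4 := hvanish (-1) (-1) m1 m1
  simp only [hdef] at v1 v2 v3 v4
  have hsum : h 1 1 (-1) + h 1 (-1) 1 + h (-1) 1 1 + h (-1) (-1) (-1) = 0 := by
    simp only [hdef]; nlinarith [v1, v2, v3, v4]
  refine ⟨hsum, fun hall => ?_⟩
  have w1 := hall 1 1 p1 p1
  have w2 := hall 1 (-1) p1 m1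
  have w3 := hall (-1) 1 m1 p1
  have w4 := hall (-1) (-1) m1 m1
  norm_num at w1 w2 w3 w4
  linarith [hsum]
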